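/- For integers q ≥ 3 and k ≥ 2, the spiro-chain S_{q,1,k} satisfies ABC(S_{q,1,k}) = (qk − k + 2)/√2 + (k − 2)·√6/4. -/
import Mathlib


open Finset

/-- The atom-bond connectivity index `ABC(G)`. -/
noncomputable def abcIndex {V : Type*} [Fintype V] (G : SimpleGraph V) : ℝ := by
  classical
  exact ∑ e ∈ G.edgeFinset,
    Sym2.lift ⟨fun u v =>
      Real.sqrt (((G.degree u : ℝ) + (G.degree v : ℝ) - 2) /
        ((G.degree u : ℝ) * (G.degree v : ℝ))),
      fun u v => congrArg Real.sqrt (by ring)⟩ e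

/-- `nClose G u v` is the number of vertices reachable from `u` that are strictly
closer to `u` than to `v`. -/
noncomputable def nClose {V : Type*} (G : SimpleGraph V) (u v : V) : ℕ :=
  Nat.card {w : V | G.Reachable u w ∧ G.dist w u < G.dist w v}

/-- The Graovac–Ghorbani index `ABC_GG(G)`. -/
noncomputable def abcggIndex {V : Type*} [Fintype V] (G : SimpleGraph V) : ℝ := by
  classical
  exact ∑ e ∈ G.edgeFinset,
    Sym2.lift ⟨fun u v =>
      Real.sqrt (((nClose G u v : ℝ) + (nClose G v u : ℝ) - 2) /
        ((nClose G u v : ℝ) * (nClose G v u : ℝ))),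
      fun u v => congrArg Real.sqrt (by ring)⟩ e

/-- The degree of a vertex, as a real number. -/
noncomputable def degR {V : Type*} [Fintype V] (G : SimpleGraph V) (v : V) : ℝ := by
  classical
  exact (G.degree v : ℝ)

/-- The `i`-th contact vertex of the spiro-chain: `c 0 = 0`, `c i = (i-1)(q-1)+h`. -/
def spiroContact (q h i : ℕ) : ℕ := if i = 0 then 0 else (i - 1) * (q - 1) + h

/-- The spiro-chain `S_{q,h,k}`: a chain of `k` cycles `C_q`, consecutive cycles
sharing a contact vertex, contact vertices on the same cycle `h` steps apart. -/
def spiroGraph (q h k : ℕ) : SimpleGraph (Fin (k * (q - 1) + 1)) :=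
  SimpleGraph.fromRel (fun p r =>
    ∃ i < k,
      (p.1 = spiroContact q h i ∧ r.1 = i * (q - 1) + 1) ∨
      (∃ j, 1 ≤ j ∧ j ≤ q - 2 ∧ p.1 = i * (q - 1) + j ∧ r.1 = i * (q - 1) + j + 1) ∨
      (p.1 = i * (q - 1) + (q - 1) ∧ r.1 = spiroContact q h i))

def spCv (Q i : ℕ) : ℕ := if i = 0 then 0 else (i - 1) * Q + 1

def spStep (Q k a b : ℕ) : Prop := ∃ i < k,
  (a = spCv Q i ∧ b = i * Q + 1) ∨
  (∃ j, 1 ≤ j ∧ j ≤ Q - 1 ∧ a = i * Q + j ∧ b = i * Q + j + 1) ∨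
  (a = i * Q + Q ∧ b = spCv Q i)

def spG (Q k : ℕ) : SimpleGraph (Fin (k * Q + 1)) := spiroGraph (Q + 1) 1 k

lemma spG_adj (Q k : ℕ) (u v : Fin (k * Q + 1)) :
    (spG Q k).Adj u v ↔ u ≠ v ∧ (spStep Q k u.1 v.1 ∨ spStep Q k v.1 u.1) := by
  have h1 : Q + 1 - 1 = Q := rfl
  have h2 : Q + 1 - 2 = Q - 1 := rfl
  simp only [spG, spiroGraph, SimpleGraph.fromRel_adj, spStep, spCv, spiroContact, h1, h2]

lemma spKey {Q : ℕ} (hQ : 1 ≤ Q) {i i' r r' : ℕ} (h1 : r < Q) (h2 : r' < Q)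
    (h3 : i * Q + r = i' * Q + r') : i = i' ∧ r = r' := by
  rcases Nat.lt_trichotomy i i' with h | h | h
  · exfalso
    have h4 : i * Q + Q ≤ i' * Q := by
      have := Nat.mul_le_mul_right Q (show i+1 ≤ i' from h)
      have e : (i + 1) * Q = i * Q + Q := by ring
      omega
    omega
  · subst h
    exact ⟨rfl, by omega⟩
  · exfalso
    have h4 : i' * Q + Q ≤ i * Q := by
      have := Nat.mul_le_mul_right Q (show i'+1 ≤ i from h)
      have e : (i' + 1) * Q = i' * Q + Q := by ring
      omega
    omega

lemma spDecomp {Q k m : ℕ} (hQ : 1 ≤ Q) (h1 : 1 ≤ m) (h2 : m ≤ k * Q) :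
    ∃ i j, i < k ∧ 1 ≤ j ∧ j ≤ Q ∧ m = i * Q + j := by
  refine ⟨(m - 1) / Q, (m - 1) % Q + 1, ?_, by omega, ?_, ?_⟩
  · by_contra h
    push_neg at h
    have : k * Q ≤ (m - 1) / Q * Q := Nat.mul_le_mul_right _ h
    have h4 : (m - 1) / Q * Q ≤ m - 1 := Nat.div_mul_le_self _ _
    omega
  · have := Nat.mod_lt (m - 1) (show 0 < Q by omega)
    omega
  · have := (Nat.div_add_mod (m - 1) Q).symm
    have e : (m - 1) / Q * Q = Q * ((m - 1) / Q) := Nat.mul_comm _ _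
    omega

lemma spMono {Q i i' : ℕ} (h : i < i') : i * Q + Q ≤ i' * Q := by
  have := Nat.mul_le_mul_right Q (show i + 1 ≤ i' from h)
  have e : (i + 1) * Q = i * Q + Q := by ring
  omega

lemma spBound {Q k i j : ℕ} (hi : i < k) (hj : j ≤ Q) : i * Q + j ≤ k * Q := by
  have := spMono (Q := Q) hi; omega

lemma spPred {Q i : ℕ} (h : 1 ≤ i) : (i - 1) * Q + Q = i * Q := by
  obtain ⟨i', rfl⟩ : ∃ i', i = i' + 1 := ⟨i - 1, by omega⟩
  simp only [Nat.add_sub_cancel]; ring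

lemma spCv_le {Q k i : ℕ} (hQ : 1 ≤ Q) (hk : 1 ≤ k) (hi : i ≤ k) : spCv Q i ≤ k * Q := by
  unfold spCv
  split
  · omega
  · exact spBound (by omega) hQ

def spFv (Q k m : ℕ) : Fin (k * Q + 1) := ⟨m % (k * Q + 1), Nat.mod_lt _ (Nat.succ_pos _)⟩

lemma spFv_val {Q k m : ℕ} (h : m ≤ k * Q) : (spFv Q k m).1 = m := Nat.mod_eq_of_lt (by omega)

lemma spFv_fst {Q k : ℕ} (u : Fin (k * Q + 1)) : spFv Q k u.1 = u :=
  Fin.ext (Nat.mod_eq_of_lt u.2)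

def spD (Q k : ℕ) : Finset (Fin (k * Q + 1)) :=
  (range (k - 1)).image (fun i => spFv Q k (i * Q + 1))

lemma spD_mem {Q k : ℕ} (hQ : 1 ≤ Q) (hk : 1 ≤ k) (v : Fin (k * Q + 1)) :
    v ∈ spD Q k ↔ ∃ i < k - 1, (v : ℕ) = i * Q + 1 := by
  simp only [spD, mem_image, mem_range]
  constructor
  · rintro ⟨i, hi, rfl⟩
    exact ⟨i, hi, spFv_val (spBound (by omega) hQ)⟩
  · rintro ⟨i, hi, hv⟩
    exact ⟨i, hi, Fin.ext (by rw [spFv_val (spBound (by omega) hQ)]; exact hv.symm)⟩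

lemma spD_card {Q k : ℕ} (hQ : 2 ≤ Q) (hk : 1 ≤ k) : (spD Q k).card = k - 1 := by
  rw [spD, card_image_of_injOn, card_range]
  intro i hi i' hi' h
  simp only [mem_coe, mem_range] at hi hi'
  have h1 : (spFv Q k (i * Q + 1)).1 = i * Q + 1 := spFv_val (spBound (by omega) (by omega))
  have h2 : (spFv Q k (i' * Q + 1)).1 = i' * Q + 1 := spFv_val (spBound (by omega) (by omega))
  have := h1 ▸ h2 ▸ congrArg Fin.val h
  exact (spKey (by omega) (by omega) (by omega) this).1

lemma adj_of_step {Q k : ℕ} (u v : Fin (k * Q + 1)) (hne : u.1 ≠ v.1)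
    (h : spStep Q k u.1 v.1 ∨ spStep Q k v.1 u.1) : (spG Q k).Adj u v :=
  (spG_adj Q k u v).2 ⟨fun h' => hne (by rw [h']), h⟩

lemma step1 {Q k i : ℕ} (hi : i < k) : spStep Q k (spCv Q i) (i * Q + 1) :=
  ⟨i, hi, Or.inl ⟨rfl, rfl⟩⟩

lemma step2 {Q k i j : ℕ} (hi : i < k) (h1 : 1 ≤ j) (h2 : j ≤ Q - 1) :
    spStep Q k (i * Q + j) (i * Q + j + 1) :=
  ⟨i, hi, Or.inr (Or.inl ⟨j, h1, h2, rfl, rfl⟩)⟩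

lemma step3 {Q k i : ℕ} (hi : i < k) : spStep Q k (i * Q + Q) (spCv Q i) :=
  ⟨i, hi, Or.inr (Or.inr ⟨rfl, rfl⟩)⟩

lemma spCv_cases (Q i : ℕ) : (i = 0 ∧ spCv Q i = 0) ∨ (1 ≤ i ∧ spCv Q i = (i - 1) * Q + 1) := by
  unfold spCv; split
  · exact Or.inl ⟨by assumption, rfl⟩
  · exact Or.inr ⟨by omega, rfl⟩

lemma spCv_lt {Q i : ℕ} (hQ : 1 ≤ Q) : spCv Q i < i * Q + 1 := by
  rcases spCv_cases Q i with ⟨h0, h⟩ | ⟨h1, h⟩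
  · subst h0; rw [h]; omega
  · rw [h]; have := spPred (Q := Q) h1; omega

lemma spCv_succ (Q i : ℕ) : spCv Q (i + 1) = i * Q + 1 := by simp [spCv]

noncomputable instance spGDecAdj (Q k : ℕ) : DecidableRel (spG Q k).Adj :=
  Classical.decRel _

lemma deg_lb {Q k : ℕ} (hQ : 2 ≤ Q) (hk : 2 ≤ k) (v : Fin (k * Q + 1)) :
    (if v ∈ spD Q k then 4 else 2) ≤ (spG Q k).degree v := by
  classical
  rw [← SimpleGraph.card_neighborFinset_eq_degree]
  by_cases hD : v ∈ spD Q k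
  · simp only [if_pos hD]
    obtain ⟨i, hi, hv⟩ := (spD_mem (by omega) (by omega) v).1 hD
    have hik : i < k := by omega
    have hb1 : spCv Q i ≤ k * Q := spCv_le (by omega) (by omega) (by omega)
    have hb2 : i * Q + 1 + 1 ≤ k * Q := by have := spBound (Q := Q) hik (show 2 ≤ Q from hQ); omega
    have hb3 : (i + 1) * Q + 1 ≤ k * Q := spBound (by omega) (by omega)
    have hb4 : (i + 1) * Q + Q ≤ k * Q := spBound (by omega) (le_refl Q)
    have e1 : (spFv Q k (spCv Q i)).1 = spCv Q i := spFv_val hb1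
    have e2 : (spFv Q k (i * Q + 1 + 1)).1 = i * Q + 1 + 1 := spFv_val hb2
    have e3 : (spFv Q k ((i + 1) * Q + 1)).1 = (i + 1) * Q + 1 := spFv_val hb3
    have e4 : (spFv Q k ((i + 1) * Q + Q)).1 = (i + 1) * Q + Q := spFv_val hb4
    have eA : (i + 1) * Q = i * Q + Q := by ring
    have hcvlt : spCv Q i < i * Q + 1 := spCv_lt (by omega)
    have d12 : spFv Q k (spCv Q i) ≠ spFv Q k (i * Q + 1 + 1) := by
      intro h; have := congrArg Fin.val h; rw [e1, e2] at this; omega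
    have d13 : spFv Q k (spCv Q i) ≠ spFv Q k ((i + 1) * Q + 1) := by
      intro h; have := congrArg Fin.val h; rw [e1, e3] at this; omega
    have d14 : spFv Q k (spCv Q i) ≠ spFv Q k ((i + 1) * Q + Q) := by
      intro h; have := congrArg Fin.val h; rw [e1, e4] at this; omega
    have d23 : spFv Q k (i * Q + 1 + 1) ≠ spFv Q k ((i + 1) * Q + 1) := by
      intro h; have := congrArg Fin.val h; rw [e2, e3] at this; omega
    have d24 : spFv Q k (i * Q + 1 + 1) ≠ spFv Q k ((i + 1) * Q + Q) := by
      intro h; have := congrArg Fin.val h; rw [e2, e4] at this; omega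
    have d34 : spFv Q k ((i + 1) * Q + 1) ≠ spFv Q k ((i + 1) * Q + Q) := by
      intro h; have := congrArg Fin.val h; rw [e3, e4] at this; omega
    have hsub : ({spFv Q k (spCv Q i), spFv Q k (i * Q + 1 + 1),
        spFv Q k ((i + 1) * Q + 1), spFv Q k ((i + 1) * Q + Q)} : Finset (Fin (k * Q + 1))) ⊆
        (spG Q k).neighborFinset v := by
      intro w hw
      simp only [mem_insert, mem_singleton] at hw
      rw [SimpleGraph.mem_neighborFinset]
      rcases hw with rfl | rfl | rfl | rfl
      · refine adj_of_step _ _ (by rw [hv, e1]; omega) (Or.inr ?_)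
        rw [hv, e1]; exact step1 hik
      · refine adj_of_step _ _ (by rw [hv, e2]; omega) (Or.inl ?_)
        rw [hv, e2]; exact step2 hik le_rfl (by omega)
      · refine adj_of_step _ _ (by rw [hv, e3]; omega) (Or.inl ?_)
        rw [hv, e3, ← spCv_succ Q i]; exact step1 (by omega)
      · refine adj_of_step _ _ (by rw [hv, e4]; omega) (Or.inr ?_)
        rw [hv, e4, ← spCv_succ Q i]; exact step3 (by omega)
    have hcard : ({spFv Q k (spCv Q i), spFv Q k (i * Q + 1 + 1),
        spFv Q k ((i + 1) * Q + 1), spFv Q k ((i + 1) * Q + Q)} : Finset (Fin (k * Q + 1))).card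
        = 4 := by
      have m1 : spFv Q k (spCv Q i) ∉ ({spFv Q k (i * Q + 1 + 1), spFv Q k ((i + 1) * Q + 1),
          spFv Q k ((i + 1) * Q + Q)} : Finset (Fin (k * Q + 1))) := by
        simp only [mem_insert, mem_singleton]
        push_neg
        exact ⟨d12, d13, d14⟩
      have m2 : spFv Q k (i * Q + 1 + 1) ∉ ({spFv Q k ((i + 1) * Q + 1),
          spFv Q k ((i + 1) * Q + Q)} : Finset (Fin (k * Q + 1))) := by
        simp only [mem_insert, mem_singleton]
        push_neg
        exact ⟨d23, d24⟩
      have m3 : spFv Q k ((i + 1) * Q + 1) ∉ ({spFv Q k ((i + 1) * Q + Q)} :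
          Finset (Fin (k * Q + 1))) := by simpa using d34
      rw [card_insert_of_notMem m1, card_insert_of_notMem m2,
          card_insert_of_notMem m3, card_singleton]
    exact hcard ▸ Finset.card_le_card hsub
  · simp only [if_neg hD]
    rcases Nat.eq_zero_or_pos v.1 with hv0 | hv1
    · -- v = 0 : neighbors 1 and Q
      have hbQ : Q ≤ k * Q := by
        have := spBound (Q := Q) (show 0 < k by omega) (le_refl Q); omega
      have e1 : (spFv Q k 1).1 = 1 := spFv_val (by omega)
      have e2 : (spFv Q k Q).1 = Q := spFv_val hbQ
      have d12 : spFv Q k 1 ≠ spFv Q k Q := by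
        intro h; have := congrArg Fin.val h; rw [e1, e2] at this; omega
      have hsub : ({spFv Q k 1, spFv Q k Q} : Finset (Fin (k * Q + 1))) ⊆
          (spG Q k).neighborFinset v := by
        intro w hw
        simp only [mem_insert, mem_singleton] at hw
        rw [SimpleGraph.mem_neighborFinset]
        rcases hw with rfl | rfl
        · refine adj_of_step _ _ (by rw [hv0, e1]; omega) (Or.inl ?_)
          rw [hv0, e1]
          have := step1 (Q := Q) (k := k) (i := 0) (by omega)
          simpa [spCv] using this
        · refine adj_of_step _ _ (by rw [hv0, e2]; omega) (Or.inr ?_)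
          rw [hv0, e2]
          have := step3 (Q := Q) (k := k) (i := 0) (by omega)
          simpa [spCv] using this
      have hcard : ({spFv Q k 1, spFv Q k Q} : Finset (Fin (k * Q + 1))).card = 2 := by
        rw [card_insert_of_notMem (by simpa using d12), card_singleton]
      exact hcard ▸ Finset.card_le_card hsub
    · obtain ⟨i, j, hik, hj1, hjQ, hv⟩ := spDecomp (k := k) (show 1 ≤ Q by omega) hv1 (by omega)
      by_cases hjone : j = 1
      · -- j = 1, must have i = k - 1
        subst hjone
        have hikk : i = k - 1 := by
          by_contra hne
          exact hD ((spD_mem (by omega) (by omega) v).2 ⟨i, by omega, hv⟩)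
        have hb1 : spCv Q i ≤ k * Q := spCv_le (by omega) (by omega) (by omega)
        have hb2 : i * Q + 1 + 1 ≤ k * Q := by
          have := spBound (Q := Q) hik (show 2 ≤ Q from hQ); omega
        have e1 : (spFv Q k (spCv Q i)).1 = spCv Q i := spFv_val hb1
        have e2 : (spFv Q k (i * Q + 1 + 1)).1 = i * Q + 1 + 1 := spFv_val hb2
        have hcvlt : spCv Q i < i * Q + 1 := spCv_lt (by omega)
        have d12 : spFv Q k (spCv Q i) ≠ spFv Q k (i * Q + 1 + 1) := by
          intro h; have := congrArg Fin.val h; rw [e1, e2] at this; omega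
        have hsub : ({spFv Q k (spCv Q i), spFv Q k (i * Q + 1 + 1)} :
            Finset (Fin (k * Q + 1))) ⊆ (spG Q k).neighborFinset v := by
          intro w hw
          simp only [mem_insert, mem_singleton] at hw
          rw [SimpleGraph.mem_neighborFinset]
          rcases hw with rfl | rfl
          · refine adj_of_step _ _ (by rw [hv, e1]; omega) (Or.inr ?_)
            rw [hv, e1]; exact step1 hik
          · refine adj_of_step _ _ (by rw [hv, e2]; omega) (Or.inl ?_)
            rw [hv, e2]; exact step2 hik le_rfl (by omega)
        have hcard : ({spFv Q k (spCv Q i), spFv Q k (i * Q + 1 + 1)} :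
            Finset (Fin (k * Q + 1))).card = 2 := by
          rw [card_insert_of_notMem (by simpa using d12), card_singleton]
        exact hcard ▸ Finset.card_le_card hsub
      · by_cases hjQ' : j = Q
        · -- j = Q : neighbors i*Q + (Q-1) and spCv Q i
          rw [hjQ'] at hv
          have hb1 : i * Q + (Q - 1) ≤ k * Q := spBound hik (by omega)
          have hb2 : spCv Q i ≤ k * Q := spCv_le (by omega) (by omega) (by omega)
          have e1 : (spFv Q k (i * Q + (Q - 1))).1 = i * Q + (Q - 1) := spFv_val hb1
          have e2 : (spFv Q k (spCv Q i)).1 = spCv Q i := spFv_val hb2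
          have hcvlt : spCv Q i < i * Q + 1 := spCv_lt (by omega)
          have d12 : spFv Q k (i * Q + (Q - 1)) ≠ spFv Q k (spCv Q i) := by
            intro h; have := congrArg Fin.val h; rw [e1, e2] at this; omega
          have hsub : ({spFv Q k (i * Q + (Q - 1)), spFv Q k (spCv Q i)} :
              Finset (Fin (k * Q + 1))) ⊆ (spG Q k).neighborFinset v := by
            intro w hw
            simp only [mem_insert, mem_singleton] at hw
            rw [SimpleGraph.mem_neighborFinset]
            rcases hw with rfl | rfl
            · refine adj_of_step _ _ (by rw [hv, e1]; omega) (Or.inr ?_)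
              rw [hv, e1]
              have := step2 (Q := Q) (k := k) hik (show 1 ≤ Q - 1 by omega) (le_refl (Q - 1))
              have heq : i * Q + (Q - 1) + 1 = i * Q + Q := by omega
              rwa [heq] at this
            · refine adj_of_step _ _ (by rw [hv, e2]; omega) (Or.inl ?_)
              rw [hv, e2]; exact step3 hik
          have hcard : ({spFv Q k (i * Q + (Q - 1)), spFv Q k (spCv Q i)} :
              Finset (Fin (k * Q + 1))).card = 2 := by
            rw [card_insert_of_notMem (by simpa using d12), card_singleton]
          exact hcard ▸ Finset.card_le_card hsub
        · -- 2 ≤ j ≤ Q - 1 : neighbors i*Q + (j-1) and i*Q + j + 1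
          have hb1 : i * Q + (j - 1) ≤ k * Q := spBound hik (by omega)
          have hb2 : i * Q + j + 1 ≤ k * Q := by
            have := spBound (Q := Q) hik (le_refl Q); omega
          have e1 : (spFv Q k (i * Q + (j - 1))).1 = i * Q + (j - 1) := spFv_val hb1
          have e2 : (spFv Q k (i * Q + j + 1)).1 = i * Q + j + 1 := spFv_val hb2
          have d12 : spFv Q k (i * Q + (j - 1)) ≠ spFv Q k (i * Q + j + 1) := by
            intro h; have := congrArg Fin.val h; rw [e1, e2] at this; omega
          have hsub : ({spFv Q k (i * Q + (j - 1)), spFv Q k (i * Q + j + 1)} :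
              Finset (Fin (k * Q + 1))) ⊆ (spG Q k).neighborFinset v := by
            intro w hw
            simp only [mem_insert, mem_singleton] at hw
            rw [SimpleGraph.mem_neighborFinset]
            rcases hw with rfl | rfl
            · refine adj_of_step _ _ (by rw [hv, e1]; omega) (Or.inr ?_)
              rw [hv, e1]
              have := step2 (Q := Q) (k := k) hik (show 1 ≤ j - 1 by omega)
                (show j - 1 ≤ Q - 1 by omega)
              have heq : i * Q + (j - 1) + 1 = i * Q + j := by omega
              rwa [heq] at this
            · refine adj_of_step _ _ (by rw [hv, e2]; omega) (Or.inl ?_)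
              rw [hv, e2]; exact step2 hik (by omega) (by omega)
          have hcard : ({spFv Q k (i * Q + (j - 1)), spFv Q k (i * Q + j + 1)} :
              Finset (Fin (k * Q + 1))).card = 2 := by
            rw [card_insert_of_notMem (by simpa using d12), card_singleton]
          exact hcard ▸ Finset.card_le_card hsub

def spAv (Q i j : ℕ) : ℕ :=
  if j = 0 then spCv Q i else if j = Q + 1 then spCv Q i else i * Q + j

def spEdge (Q k i j : ℕ) : Sym2 (Fin (k * Q + 1)) :=
  s(spFv Q k (spAv Q i j), spFv Q k (spAv Q i (j + 1)))

lemma step_mem {Q k : ℕ} (hQ : 2 ≤ Q) {u v : Fin (k * Q + 1)} (h : spStep Q k u.1 v.1) :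
    s(u, v) ∈ (range k ×ˢ range (Q + 1)).image (fun p => spEdge Q k p.1 p.2) := by
  obtain ⟨i, hi, hc⟩ := h
  rcases hc with ⟨ha, hb⟩ | ⟨j, hj1, hj2, ha, hb⟩ | ⟨ha, hb⟩
  · refine mem_image.2 ⟨(i, 0), mem_product.2 ⟨mem_range.2 hi, mem_range.2 (by omega)⟩, ?_⟩
    show spEdge Q k i 0 = s(u, v)
    have h1 : spAv Q i 0 = spCv Q i := by simp [spAv]
    have h2 : spAv Q i (0 + 1) = i * Q + 1 := by
      simp only [spAv]; rw [if_neg (by omega), if_neg (by omega)]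
    rw [spEdge, h1, h2, ← ha, ← hb, spFv_fst, spFv_fst]
  · refine mem_image.2 ⟨(i, j), mem_product.2 ⟨mem_range.2 hi, mem_range.2 (by omega)⟩, ?_⟩
    show spEdge Q k i j = s(u, v)
    have h1 : spAv Q i j = i * Q + j := by
      simp only [spAv]; rw [if_neg (by omega), if_neg (by omega)]
    have h2 : spAv Q i (j + 1) = i * Q + (j + 1) := by
      simp only [spAv]; rw [if_neg (by omega), if_neg (by omega)]
    have h3 : i * Q + (j + 1) = i * Q + j + 1 := by omega
    rw [spEdge, h1, h2, h3, ← hb, ← ha, spFv_fst, spFv_fst]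
  · refine mem_image.2 ⟨(i, Q), mem_product.2 ⟨mem_range.2 hi, mem_range.2 (by omega)⟩, ?_⟩
    show spEdge Q k i Q = s(u, v)
    have h1 : spAv Q i Q = i * Q + Q := by
      simp only [spAv]; rw [if_neg (by omega), if_neg (by omega)]
    have h2 : spAv Q i (Q + 1) = spCv Q i := by
      simp [spAv]
    rw [spEdge, h1, h2, ← ha, ← hb, spFv_fst, spFv_fst]

lemma edge_sub {Q k : ℕ} (hQ : 2 ≤ Q) :
    (spG Q k).edgeFinset ⊆ (range k ×ˢ range (Q + 1)).image (fun p => spEdge Q k p.1 p.2) := by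
  intro e he
  induction e using Sym2.ind with
  | _ u v =>
    rw [SimpleGraph.mem_edgeFinset, SimpleGraph.mem_edgeSet] at he
    obtain ⟨hne, h | h⟩ := (spG_adj Q k u v).1 he
    · exact step_mem hQ h
    · rw [Sym2.eq_swap]; exact step_mem hQ h

lemma deg_and_card {Q k : ℕ} (hQ : 2 ≤ Q) (hk : 2 ≤ k) :
    (∀ v, (spG Q k).degree v = if v ∈ spD Q k then 4 else 2) ∧
    (spG Q k).edgeFinset.card = k * Q + k := by
  classical
  have hsum : ∑ v, (spG Q k).degree v = 2 * (spG Q k).edgeFinset.card :=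
    SimpleGraph.sum_degrees_eq_twice_card_edges _
  have hlow : ∑ v : Fin (k * Q + 1), (if v ∈ spD Q k then 4 else 2) = 2 * (k * Q) + 2 * k := by
    have hsp : ∀ v : Fin (k * Q + 1),
        (if v ∈ spD Q k then 4 else 2) = 2 + (if v ∈ spD Q k then 2 else 0) := by
      intro v; split <;> rfl
    rw [Finset.sum_congr rfl (fun v _ => hsp v), Finset.sum_add_distrib, Finset.sum_ite_mem,
      Finset.univ_inter, Finset.sum_const, Finset.sum_const, spD_card hQ (by omega), card_univ,
      Fintype.card_fin, smul_eq_mul, smul_eq_mul]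
    omega
  have hle : ∀ v ∈ (univ : Finset (Fin (k * Q + 1))),
      (if v ∈ spD Q k then 4 else 2) ≤ (spG Q k).degree v := fun v _ => deg_lb hQ hk v
  have hcard_le : (spG Q k).edgeFinset.card ≤ k * Q + k := by
    refine le_trans (Finset.card_le_card (edge_sub hQ)) (le_trans Finset.card_image_le ?_)
    rw [Finset.card_product, card_range, card_range]
    have : k * (Q + 1) = k * Q + k := by ring
    omega
  have hsum_ge : 2 * (k * Q) + 2 * k ≤ ∑ v, (spG Q k).degree v :=
    hlow ▸ Finset.sum_le_sum hle
  have hEcard : (spG Q k).edgeFinset.card = k * Q + k := by omega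
  refine ⟨?_, hEcard⟩
  intro v
  by_contra hne
  have hlt : (if v ∈ spD Q k then 4 else 2) < (spG Q k).degree v :=
    lt_of_le_of_ne (deg_lb hQ hk v) (fun h => hne h.symm)
  have := Finset.sum_lt_sum hle ⟨v, mem_univ v, hlt⟩
  omega

def spE44 (Q k : ℕ) : Finset (Sym2 (Fin (k * Q + 1))) :=
  (range (k - 2)).image (fun i => s(spFv Q k (i * Q + 1), spFv Q k ((i + 1) * Q + 1)))

lemma dd_step {Q k i₁ i₂ : ℕ} (hQ : 2 ≤ Q) {a b : ℕ} (h1 : a = i₁ * Q + 1)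
    (h2 : b = i₂ * Q + 1) (hs : spStep Q k a b) : i₂ = i₁ + 1 := by
  obtain ⟨i, hi, hc⟩ := hs
  rcases hc with ⟨ha, hb⟩ | ⟨j, hj1, hj2, ha, hb⟩ | ⟨ha, hb⟩
  · rcases spCv_cases Q i with ⟨h0, hcv⟩ | ⟨hpos, hcv⟩
    · exfalso; rw [hcv] at ha; omega
    · rw [hcv] at ha
      have k1 := spKey (show 1 ≤ Q by omega) (show (1:ℕ) < Q by omega)
        (show (1:ℕ) < Q by omega) (show (i-1) * Q + 1 = i₁ * Q + 1 by rw [← ha, h1])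
      have k2 := spKey (show 1 ≤ Q by omega) (show (1:ℕ) < Q by omega)
        (show (1:ℕ) < Q by omega) (show i * Q + 1 = i₂ * Q + 1 by rw [← hb, h2])
      omega
  · exfalso
    have k1 := spKey (show 1 ≤ Q by omega) (show j < Q by omega)
      (show (1:ℕ) < Q by omega) (show i * Q + j = i₁ * Q + 1 by rw [← ha, h1])
    have heq2 : i * Q + 2 = i₂ * Q + 1 := by
      have : b = i * Q + 2 := by omega
      rw [← this, h2]
    rcases Nat.lt_trichotomy i i₂ with h | h | h
    · have := spMono (Q := Q) h; omega
    · subst h; omega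
    · have := spMono (Q := Q) h; omega
  · exfalso
    have heq : (i + 1) * Q + 0 = i₁ * Q + 1 := by
      have e : (i + 1) * Q = i * Q + Q := by ring
      omega
    have := spKey (show 1 ≤ Q by omega) (show (0:ℕ) < Q by omega)
      (show (1:ℕ) < Q by omega) heq
    omega

lemma dd_adj {Q k : ℕ} (hQ : 2 ≤ Q) (hk : 2 ≤ k) {u v : Fin (k * Q + 1)} (hu : u ∈ spD Q k)
    (hv : v ∈ spD Q k) (h : (spG Q k).Adj u v) : s(u, v) ∈ spE44 Q k := by
  obtain ⟨i₁, hi₁, hu1⟩ := (spD_mem (by omega) (by omega) u).1 hu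
  obtain ⟨i₂, hi₂, hv1⟩ := (spD_mem (by omega) (by omega) v).1 hv
  obtain ⟨hne, hs | hs⟩ := (spG_adj Q k u v).1 h
  · have h12 : i₂ = i₁ + 1 := dd_step hQ hu1 hv1 hs
    refine mem_image.2 ⟨i₁, mem_range.2 (by omega), ?_⟩
    have e1 : spFv Q k (i₁ * Q + 1) = u := by rw [← hu1]; exact spFv_fst u
    have e2 : spFv Q k ((i₁ + 1) * Q + 1) = v := by
      rw [show i₁ + 1 = i₂ by omega, ← hv1]; exact spFv_fst v
    rw [e1, e2]
  · have h12 : i₁ = i₂ + 1 := dd_step hQ hv1 hu1 hs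
    refine mem_image.2 ⟨i₂, mem_range.2 (by omega), ?_⟩
    have e1 : spFv Q k (i₂ * Q + 1) = v := by rw [← hv1]; exact spFv_fst v
    have e2 : spFv Q k ((i₂ + 1) * Q + 1) = u := by
      rw [show i₂ + 1 = i₁ by omega, ← hu1]; exact spFv_fst u
    rw [e1, e2, Sym2.eq_swap]

lemma spE44_sub {Q k : ℕ} (hQ : 2 ≤ Q) (hk : 2 ≤ k) :
    spE44 Q k ⊆ (spG Q k).edgeFinset := by
  intro e he
  obtain ⟨i, hi, rfl⟩ := mem_image.1 he
  rw [mem_range] at hi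
  rw [SimpleGraph.mem_edgeFinset, SimpleGraph.mem_edgeSet]
  have e1 : (spFv Q k (i * Q + 1)).1 = i * Q + 1 := spFv_val (spBound (by omega) (by omega))
  have e2 : (spFv Q k ((i + 1) * Q + 1)).1 = (i + 1) * Q + 1 :=
    spFv_val (spBound (by omega) (by omega))
  have eA : (i + 1) * Q = i * Q + Q := by ring
  refine adj_of_step _ _ (by rw [e1, e2]; omega) (Or.inl ?_)
  rw [e1, e2, ← spCv_succ Q i]
  exact step1 (by omega)

lemma spE44_card {Q k : ℕ} (hQ : 2 ≤ Q) (hk : 2 ≤ k) : (spE44 Q k).card = k - 2 := by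
  rw [spE44, card_image_of_injOn, card_range]
  intro i hi i' hi' h
  simp only [mem_coe, mem_range] at hi hi'
  have e1 : (spFv Q k (i * Q + 1)).1 = i * Q + 1 := spFv_val (spBound (by omega) (by omega))
  have e2 : (spFv Q k ((i + 1) * Q + 1)).1 = (i + 1) * Q + 1 :=
    spFv_val (spBound (by omega) (by omega))
  have e1' : (spFv Q k (i' * Q + 1)).1 = i' * Q + 1 := spFv_val (spBound (by omega) (by omega))
  have e2' : (spFv Q k ((i' + 1) * Q + 1)).1 = (i' + 1) * Q + 1 :=
    spFv_val (spBound (by omega) (by omega))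
  rcases Sym2.eq_iff.1 h with ⟨ha, hb⟩ | ⟨ha, hb⟩
  · have := e1 ▸ e1' ▸ congrArg Fin.val ha
    exact (spKey (show 1 ≤ Q by omega) (by omega) (by omega) this).1
  · have h1 := e1 ▸ e2' ▸ congrArg Fin.val ha
    have h2 := e2 ▸ e1' ▸ congrArg Fin.val hb
    have k1 := (spKey (show 1 ≤ Q by omega) (show (1:ℕ) < Q by omega) (by omega) h1).1
    have k2 := (spKey (show 1 ≤ Q by omega) (show (1:ℕ) < Q by omega) (by omega) h2).1
    omega

lemma weight_eq {Q k : ℕ} (hQ : 2 ≤ Q) (hk : 2 ≤ k) {e : Sym2 (Fin (k * Q + 1))}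
    (he : e ∈ (spG Q k).edgeFinset) :
    Sym2.lift ⟨fun u v =>
      Real.sqrt ((((spG Q k).degree u : ℝ) + ((spG Q k).degree v : ℝ) - 2) /
        (((spG Q k).degree u : ℝ) * ((spG Q k).degree v : ℝ))),
      fun u v => congrArg Real.sqrt (by ring)⟩ e
    = if e ∈ spE44 Q k then Real.sqrt 6 / 4 else (Real.sqrt 2)⁻¹ := by
  induction e using Sym2.ind with
  | _ u v =>
    rw [SimpleGraph.mem_edgeFinset, SimpleGraph.mem_edgeSet] at he
    rw [Sym2.lift_mk]
    show Real.sqrt ((((spG Q k).degree u : ℝ) + ((spG Q k).degree v : ℝ) - 2) /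
      (((spG Q k).degree u : ℝ) * ((spG Q k).degree v : ℝ))) = _
    obtain hdeg := (deg_and_card hQ hk).1
    by_cases h44 : s(u, v) ∈ spE44 Q k
    · rw [if_pos h44]
      have hboth : u ∈ spD Q k ∧ v ∈ spD Q k := by
        obtain ⟨i, hi, heq⟩ := mem_image.1 h44
        rw [mem_range] at hi
        have m1 : spFv Q k (i * Q + 1) ∈ spD Q k :=
          mem_image.2 ⟨i, mem_range.2 (by omega), rfl⟩
        have m2 : spFv Q k ((i + 1) * Q + 1) ∈ spD Q k := by
          refine (spD_mem (by omega) (by omega) _).2 ⟨i + 1, by omega, ?_⟩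
          exact spFv_val (spBound (by omega) (by omega))
        rcases Sym2.eq_iff.1 heq with ⟨h1, h2⟩ | ⟨h1, h2⟩
        · exact ⟨h1 ▸ m1, h2 ▸ m2⟩
        · exact ⟨h2 ▸ m2, h1 ▸ m1⟩
      rw [hdeg u, hdeg v, if_pos hboth.1, if_pos hboth.2]
      push_cast
      have harg : ((4:ℝ) + 4 - 2) / (4 * 4) = (Real.sqrt 6 / 4) ^ 2 := by
        rw [div_pow, Real.sq_sqrt (by norm_num : (0:ℝ) ≤ 6)]
        norm_num
      rw [harg, Real.sqrt_sq (by positivity)]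
    · rw [if_neg h44]
      have hnot : ¬(u ∈ spD Q k ∧ v ∈ spD Q k) := fun ⟨h1, h2⟩ => h44 (dd_adj hQ hk h1 h2 he)
      rw [hdeg u, hdeg v]
      by_cases hu : u ∈ spD Q k <;> by_cases hv : v ∈ spD Q k
      · exact absurd ⟨hu, hv⟩ hnot
      · rw [if_pos hu, if_neg hv]
        push_cast
        rw [show ((4:ℝ) + 2 - 2) / (4 * 2) = 2⁻¹ by norm_num, Real.sqrt_inv]
      · rw [if_neg hu, if_pos hv]
        push_cast
        rw [show ((2:ℝ) + 4 - 2) / (2 * 4) = 2⁻¹ by norm_num, Real.sqrt_inv]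
      · rw [if_neg hu, if_neg hv]
        push_cast
        rw [show ((2:ℝ) + 2 - 2) / (2 * 2) = 2⁻¹ by norm_num, Real.sqrt_inv]

theorem abc_spiro_aux (Q k : ℕ) (hQ : 2 ≤ Q) (hk : 2 ≤ k) :
    abcIndex (spG Q k) =
      (((Q:ℝ) + 1) * (k:ℝ) - (k:ℝ) + 2) / Real.sqrt 2 + ((k:ℝ) - 2) * Real.sqrt 6 / 4 := by
  classical
  obtain ⟨hdeg, hEcard⟩ := deg_and_card (k := k) hQ hk
  unfold abcIndex
  rw [← Finset.sum_sdiff (spE44_sub hQ hk)]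
  have h1 : ∀ e ∈ (spG Q k).edgeFinset \ spE44 Q k,
      (Sym2.lift ⟨fun u v =>
        Real.sqrt ((((spG Q k).degree u : ℝ) + ((spG Q k).degree v : ℝ) - 2) /
          (((spG Q k).degree u : ℝ) * ((spG Q k).degree v : ℝ))),
        fun u v => congrArg Real.sqrt (by ring)⟩) e = (Real.sqrt 2)⁻¹ := by
    intro e he
    rw [mem_sdiff] at he
    rw [weight_eq hQ hk he.1, if_neg he.2]
  have h2 : ∀ e ∈ spE44 Q k,
      (Sym2.lift ⟨fun u v =>
        Real.sqrt ((((spG Q k).degree u : ℝ) + ((spG Q k).degree v : ℝ) - 2) /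
          (((spG Q k).degree u : ℝ) * ((spG Q k).degree v : ℝ))),
        fun u v => congrArg Real.sqrt (by ring)⟩) e = Real.sqrt 6 / 4 := by
    intro e he
    rw [weight_eq hQ hk (spE44_sub hQ hk he), if_pos he]
  rw [Finset.sum_congr rfl h1, Finset.sum_congr rfl h2, Finset.sum_const, Finset.sum_const,
    card_sdiff_of_subset (spE44_sub hQ hk), spE44_card hQ hk, hEcard]
  have hc : k * Q + k - (k - 2) = k * Q + 2 := by omega
  rw [hc, nsmul_eq_mul, nsmul_eq_mul, Nat.cast_sub hk]
  push_cast
  have hs : Real.sqrt 2 ≠ 0 := by positivity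
  field_simp
  ring

theorem abc_spiroGraph_one (q k : ℕ) (hq : 3 ≤ q) (hk : 2 ≤ k) :
    abcIndex (spiroGraph q 1 k) =
      ((q : ℝ) * (k : ℝ) - (k : ℝ) + 2) / Real.sqrt 2 + ((k : ℝ) - 2) * Real.sqrt 6 / 4 := by
  obtain ⟨Q, rfl⟩ : ∃ Q, q = Q + 1 := ⟨q - 1, by omega⟩
  have hQ : 2 ≤ Q := by omega
  calc abcIndex (spiroGraph (Q + 1) 1 k) = abcIndex (spG Q k) := rfl
    _ = (((Q:ℝ) + 1) * (k:ℝ) - (k:ℝ) + 2) / Real.sqrt 2 + ((k:ℝ) - 2) * Real.sqrt 6 / 4 :=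
        abc_spiro_aux Q k hQ hk
    _ = ((((Q+1 : ℕ)) : ℝ) * (k : ℝ) - (k : ℝ) + 2) / Real.sqrt 2 +
        ((k : ℝ) - 2) * Real.sqrt 6 / 4 := by push_cast; ring
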